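/- In the cube construction with parameters 0 < h ≤ 1/2 and 0 ≤ w ≤ 1, and for any fixed j ∈ {1,…,M}: under π_j the Bayes classifier is f* ≡ 1; the classifier f_j minimizes the 0–1 risk A^{φ₀} over F = {f₁,…,f_M}; and for every k ≠ j, A^{φ₀}(f_k) − A^{φ₀}(f_j) = (1−w)h/4. -/

import Mathlib

open MeasureTheory
open scoped ENNReal NNReal

/-- `Y ∈ {−1,1}` encoded by a boolean: `true ↦ 1`, `false ↦ −1`. -/
noncomputable def ytoR (b : Bool) : ℝ := if b then 1 else -1

/-- The φ-risk `A^φ(f) = E[φ(Y f(X))]` under the distribution `π` of `(X,Y)`. -/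
noncomputable def phiRisk {𝒳 : Type*} [MeasurableSpace 𝒳]
    (π : Measure (𝒳 × Bool)) (φ : ℝ → ℝ) (f : 𝒳 → ℝ) : ℝ :=
  ∫ p, φ (ytoR p.2 * f p.1) ∂π

/-- The minimal φ-risk `A^φ_*`, the infimum of `A^φ` over all measurable real-valued functions. -/
noncomputable def phiRiskStar {𝒳 : Type*} [MeasurableSpace 𝒳]
    (π : Measure (𝒳 × Bool)) (φ : ℝ → ℝ) : ℝ :=
  sInf {r | ∃ f : 𝒳 → ℝ, Measurable f ∧ r = phiRisk π φ f}

/-- The joint distribution `π = (P^X, η)` on `𝒳 × {−1,1}` of a pair `(X,Y)` where `X` has law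
`P^X` and `P(Y = 1 | X = x) = η(x)` (the label `1` is encoded by `true`, `−1` by `false`). -/
noncomputable def jointMeasure {𝒳 : Type*} [MeasurableSpace 𝒳]
    (PX : Measure 𝒳) (η : 𝒳 → ℝ) : Measure (𝒳 × Bool) :=
  PX.bind fun x =>
    ENNReal.ofReal (η x) • Measure.dirac (x, true) +
      ENNReal.ofReal (1 - η x) • Measure.dirac (x, false)

/-- The Bernoulli measure on `Bool` giving mass `p` to `true` and `1 − p` to `false`
(`true` encodes `1` and `false` encodes `−1`). -/
noncomputable def bern (p : ℝ) : Measure Bool :=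
  ENNReal.ofReal p • Measure.dirac true + ENNReal.ofReal (1 - p) • Measure.dirac false

/-- The marginal `P^X` of the cube construction on `𝒳 = {−1,1}^{M+1}`: the coordinates are
independent, `P^X(x⁰ = 1) = w` and `P^X(x^j = 1) = 1/2` for `j = 1, …, M`. -/
noncomputable def cubePX (M : ℕ) (w : ℝ) : Measure (Fin (M + 1) → Bool) :=
  Measure.pi fun i => if i = 0 then bern w else bern (1 / 2)

/-- The conditional probability function `η^{(j)}` of the cube construction:
`η^{(j)}(x) = 1` if `x⁰ = 1`; `1/2 + h` if `x⁰ = −1, x^j = 1`; `1/2 + h/2` if `x⁰ = −1, x^j = −1`. -/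
noncomputable def cubeEta (M : ℕ) (h : ℝ) (j : Fin M) (x : Fin (M + 1) → Bool) : ℝ :=
  if x 0 then 1 else if x j.succ then 1 / 2 + h else 1 / 2 + h / 2

/-- The classifiers `f_k(x) = x^k`, `k = 1, …, M`, of the cube construction. -/
noncomputable def cubeF (M : ℕ) (k : Fin M) (x : Fin (M + 1) → Bool) : ℝ :=
  if x k.succ then 1 else -1

set_option maxHeartbeats 1000000

lemma bern_true (p : ℝ) : bern p {true} = ENNReal.ofReal p := by
  simp [bern]

lemma bern_false (p : ℝ) : bern p {false} = ENNReal.ofReal (1 - p) := by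
  simp [bern]

lemma bern_prob {p : ℝ} (h0 : 0 ≤ p) (h1 : p ≤ 1) : IsProbabilityMeasure (bern p) := by
  constructor
  simp [bern]
  rw [← ENNReal.ofReal_add h0 (by linarith), ← ENNReal.ofReal_one]
  ring_nf

lemma pi_fiber {n : ℕ} (μ : Fin n → Measure Bool) [∀ i, IsProbabilityMeasure (μ i)]
    {i0 i1 i2 : Fin n} (h01 : i0 ≠ i1) (h02 : i0 ≠ i2) (h12 : i1 ≠ i2) (a b c : Bool) :
    Measure.pi μ {y | y i0 = a ∧ y i1 = b ∧ y i2 = c} = μ i0 {a} * μ i1 {b} * μ i2 {c} := by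
  classical
  set t : Fin n → Set Bool := fun i =>
    if i = i0 then {a} else if i = i1 then {b} else if i = i2 then {c} else Set.univ with ht
  have hset : {y : Fin n → Bool | y i0 = a ∧ y i1 = b ∧ y i2 = c} = Set.pi Set.univ t := by
    ext y
    simp only [Set.mem_setOf_eq, Set.mem_pi, Set.mem_univ, true_implies, ht]
    constructor
    · rintro ⟨h1, h2, h3⟩ i
      by_cases e0 : i = i0
      · subst e0; simp [h1]
      by_cases e1 : i = i1
      · subst e1; simp [e0, h2]
      by_cases e2 : i = i2
      · subst e2; simp [e0, e1, h3]
      · simp [e0, e1, e2]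
    · intro hy
      refine ⟨?_, ?_, ?_⟩
      · have := hy i0; simpa using this
      · have := hy i1; simpa [Ne.symm h01] using this
      · have := hy i2; simpa [Ne.symm h02, Ne.symm h12] using this
  rw [hset, Measure.pi_pi]
  rw [← Finset.mul_prod_erase Finset.univ (fun i => μ i (t i)) (Finset.mem_univ i0),
      ← Finset.mul_prod_erase _ _ ((Finset.mem_erase).2 ⟨h01.symm, Finset.mem_univ i1⟩),
      ← Finset.mul_prod_erase _ _ ((Finset.mem_erase).2
          ⟨h12.symm, (Finset.mem_erase).2 ⟨h02.symm, Finset.mem_univ i2⟩⟩),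
      Finset.prod_eq_one]
  · have e0 : t i0 = {a} := by simp [ht]
    have e1 : t i1 = {b} := by simp only [ht, if_neg h01.symm, if_pos rfl]; simp
    have e2 : t i2 = {c} := by simp only [ht, if_neg h02.symm, if_neg h12.symm, if_pos rfl]; simp
    rw [e0, e1, e2]; ring
  · intro i hi
    simp only [Finset.mem_erase] at hi
    obtain ⟨hi2, hi1, hi0, -⟩ := hi
    simp only [ht, if_neg hi0, if_neg hi1, if_neg hi2]
    exact measure_univ

lemma lintegral_pi_three {n : ℕ} (μ : Fin n → Measure Bool) [∀ i, IsProbabilityMeasure (μ i)]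
    {i0 i1 i2 : Fin n} (h01 : i0 ≠ i1) (h02 : i0 ≠ i2) (h12 : i1 ≠ i2)
    (F : Bool → Bool → Bool → ℝ) (hF : ∀ a b c, 0 ≤ F a b c) :
    (∫⁻ x, ENNReal.ofReal (F (x i0) (x i1) (x i2)) ∂Measure.pi μ).toReal
      = ∑ a : Bool, ∑ b : Bool, ∑ c : Bool,
          F a b c * ((μ i0 {a}).toReal * (μ i1 {b}).toReal * (μ i2 {c}).toReal) := by
  classical
  have hrw : ∀ x : Fin n → Bool, ENNReal.ofReal (F (x i0) (x i1) (x i2))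
      = ∑ a : Bool, ∑ b : Bool, ∑ c : Bool,
          Set.indicator {y : Fin n → Bool | y i0 = a ∧ y i1 = b ∧ y i2 = c}
            (fun _ => ENNReal.ofReal (F a b c)) x := by
    intro x
    simp only [Fintype.sum_bool, Set.indicator_apply, Set.mem_setOf_eq]
    rcases Bool.eq_false_or_eq_true (x i0) with h0 | h0 <;>
      rcases Bool.eq_false_or_eq_true (x i1) with h1 | h1 <;>
        rcases Bool.eq_false_or_eq_true (x i2) with h2 | h2 <;>
          simp [h0, h1, h2]
  have key : ∫⁻ x, ENNReal.ofReal (F (x i0) (x i1) (x i2)) ∂Measure.pi μ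
      = ∑ a : Bool, ∑ b : Bool, ∑ c : Bool,
          ENNReal.ofReal (F a b c) * (μ i0 {a} * μ i1 {b} * μ i2 {c}) := by
    rw [lintegral_congr hrw,
        lintegral_finset_sum _ (fun _ _ => Measurable.of_discrete)]
    refine Finset.sum_congr rfl fun a _ => ?_
    rw [lintegral_finset_sum _ (fun _ _ => Measurable.of_discrete)]
    refine Finset.sum_congr rfl fun b _ => ?_
    rw [lintegral_finset_sum _ (fun _ _ => Measurable.of_discrete)]
    refine Finset.sum_congr rfl fun c _ => ?_
    rw [lintegral_indicator_const MeasurableSet.of_discrete,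
        pi_fiber μ h01 h02 h12]
  rw [key]
  rw [ENNReal.toReal_sum (fun a _ => ?_)]
  · refine Finset.sum_congr rfl fun a _ => ?_
    rw [ENNReal.toReal_sum (fun b _ => ?_)]
    · refine Finset.sum_congr rfl fun b _ => ?_
      rw [ENNReal.toReal_sum (fun c _ => ?_)]
      · refine Finset.sum_congr rfl fun c _ => ?_
        rw [ENNReal.toReal_mul, ENNReal.toReal_mul, ENNReal.toReal_mul,
            ENNReal.toReal_ofReal (hF a b c)]
      · exact ENNReal.mul_ne_top ENNReal.ofReal_ne_top
          (ENNReal.mul_ne_top (ENNReal.mul_ne_top (measure_ne_top _ _) (measure_ne_top _ _))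
            (measure_ne_top _ _))
    · exact ENNReal.sum_ne_top.2 fun c _ => ENNReal.mul_ne_top ENNReal.ofReal_ne_top
        (ENNReal.mul_ne_top (ENNReal.mul_ne_top (measure_ne_top _ _) (measure_ne_top _ _))
          (measure_ne_top _ _))
  · exact ENNReal.sum_ne_top.2 fun b _ => ENNReal.sum_ne_top.2 fun c _ =>
      ENNReal.mul_ne_top ENNReal.ofReal_ne_top
        (ENNReal.mul_ne_top (ENNReal.mul_ne_top (measure_ne_top _ _) (measure_ne_top _ _))
          (measure_ne_top _ _))

lemma phiRisk_eq {𝒳 : Type*} [MeasurableSpace 𝒳] [Countable 𝒳] [DiscreteMeasurableSpace 𝒳]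
    (PX : Measure 𝒳) (η : 𝒳 → ℝ) (hη0 : ∀ x, 0 ≤ η x) (hη1 : ∀ x, η x ≤ 1) (f : 𝒳 → ℝ) :
    phiRisk (jointMeasure PX η) (fun x => if x ≤ 0 then 1 else 0) f
      = (∫⁻ x, ENNReal.ofReal
          (η x * (if f x ≤ 0 then 1 else 0) + (1 - η x) * (if -f x ≤ 0 then 1 else 0))
          ∂PX).toReal := by
  have hnn : ∀ z : ℝ, (0:ℝ) ≤ if z ≤ 0 then 1 else 0 := by
    intro z; split_ifs <;> norm_num
  rw [phiRisk, integral_eq_lintegral_of_nonneg_ae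
      (Filter.Eventually.of_forall fun p => hnn _)
      (Measurable.of_discrete.aestronglyMeasurable)]
  congr 1
  rw [jointMeasure, Measure.lintegral_bind Measurable.of_discrete.aemeasurable
      Measurable.of_discrete.aemeasurable]
  refine lintegral_congr fun x => ?_
  rw [lintegral_add_measure, lintegral_smul_measure, lintegral_smul_measure,
      lintegral_dirac, lintegral_dirac]
  have e1 : ytoR true * f x = f x := by simp [ytoR]
  have e2 : ytoR false * f x = -f x := by simp [ytoR]
  rw [e1, e2, ENNReal.ofReal_add (mul_nonneg (hη0 x) (hnn _))
        (mul_nonneg (by linarith [hη1 x]) (hnn _)),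
      ENNReal.ofReal_mul (hη0 x), ENNReal.ofReal_mul (by linarith [hη1 x]), smul_eq_mul,
      smul_eq_mul]

/-- in the cube construction with `0 < h ≤ 1/2` and `0 ≤ w ≤ 1`, under `π_j`:
the Bayes classifier is `f* ≡ 1` (indeed `η^{(j)} > 1/2` everywhere and the constant classifier
`1` attains the minimal 0–1 risk); `f_j` minimizes the 0–1 risk over `F = {f₁, …, f_M}`; and
`A^{φ₀}(f_k) − A^{φ₀}(f_j) = (1−w)h/4` for every `k ≠ j`. -/
theorem cube_zero_one_risks (M : ℕ) (hM : 2 ≤ M) (h w : ℝ)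
    (hh0 : 0 < h) (hh : h ≤ 1 / 2) (hw0 : 0 ≤ w) (hw1 : w ≤ 1) (j : Fin M) :
    (∀ x, 1 / 2 < cubeEta M h j x) ∧
    (phiRisk (jointMeasure (cubePX M w) (cubeEta M h j)) (fun x => if x ≤ 0 then 1 else 0)
        (fun _ => 1) =
      phiRiskStar (jointMeasure (cubePX M w) (cubeEta M h j))
        (fun x => if x ≤ 0 then 1 else 0)) ∧
    (∀ k : Fin M,
      phiRisk (jointMeasure (cubePX M w) (cubeEta M h j)) (fun x => if x ≤ 0 then 1 else 0)
          (cubeF M j) ≤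
        phiRisk (jointMeasure (cubePX M w) (cubeEta M h j)) (fun x => if x ≤ 0 then 1 else 0)
          (cubeF M k)) ∧
    (∀ k : Fin M, k ≠ j →
      phiRisk (jointMeasure (cubePX M w) (cubeEta M h j)) (fun x => if x ≤ 0 then 1 else 0)
          (cubeF M k) -
        phiRisk (jointMeasure (cubePX M w) (cubeEta M h j)) (fun x => if x ≤ 0 then 1 else 0)
          (cubeF M j) = (1 - w) * h / 4) := by
  classical
  haveI hPM : ∀ i : Fin (M + 1), IsProbabilityMeasure (if i = 0 then bern w else bern (1/2 : ℝ)) := by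
    intro i
    split_ifs
    · exact bern_prob hw0 hw1
    · exact bern_prob (by norm_num) (by norm_num)
  haveI : IsProbabilityMeasure (cubePX M w) := by
    unfold cubePX; infer_instance
  have part1 : ∀ x, 1 / 2 < cubeEta M h j x := by
    intro x; unfold cubeEta; split_ifs <;> linarith
  have hη0 : ∀ x, 0 ≤ cubeEta M h j x := fun x => by linarith [part1 x]
  have hη1 : ∀ x, cubeEta M h j x ≤ 1 := by
    intro x; unfold cubeEta; split_ifs <;> linarith
  -- a coordinate different from j
  haveI : Nontrivial (Fin M) := by
    rcases M with _ | _ | M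
    · omega
    · omega
    · infer_instance
  obtain ⟨k0, hk0⟩ : ∃ k0 : Fin M, k0 ≠ j := exists_ne j
  have hsucc0 : ∀ k : Fin M, (0 : Fin (M+1)) ≠ k.succ := fun k => (Fin.succ_ne_zero k).symm
  have hsuccne : ∀ k k' : Fin M, k ≠ k' → k.succ ≠ k'.succ := by
    intro k k' hne e
    exact hne (Fin.succ_injective M e)
  -- mass computations
  have mwt : ((bern w) {true}).toReal = w := by rw [bern_true, ENNReal.toReal_ofReal hw0]
  have mwf : ((bern w) {false}).toReal = 1 - w := by
    rw [bern_false, ENNReal.toReal_ofReal (by linarith)]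
  have mh : ∀ b : Bool, ((bern (1/2 : ℝ)) {b}).toReal = 1/2 := by
    intro b
    cases b
    · rw [bern_false, ENNReal.toReal_ofReal (by norm_num)]; norm_num
    · rw [bern_true, ENNReal.toReal_ofReal (by norm_num)]
  -- generic risk computation
  have hcalc : ∀ (f : (Fin (M+1) → Bool) → ℝ) (F : Bool → Bool → Bool → ℝ),
      (∀ a b c, 0 ≤ F a b c) → ∀ (i2 : Fin (M+1)), (0 : Fin (M+1)) ≠ i2 → j.succ ≠ i2 →
      (∀ x : Fin (M+1) → Bool,
        cubeEta M h j x * (if f x ≤ 0 then (1:ℝ) else 0)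
          + (1 - cubeEta M h j x) * (if -f x ≤ 0 then (1:ℝ) else 0)
          = F (x 0) (x j.succ) (x i2)) →
      phiRisk (jointMeasure (cubePX M w) (cubeEta M h j)) (fun x => if x ≤ 0 then 1 else 0) f
        = ∑ a : Bool, ∑ b : Bool, ∑ c : Bool, F a b c *
            (((if (0 : Fin (M+1)) = 0 then bern w else bern (1/2 : ℝ)) {a}).toReal *
             ((if j.succ = 0 then bern w else bern (1/2 : ℝ)) {b}).toReal *
             ((if i2 = 0 then bern w else bern (1/2 : ℝ)) {c}).toReal) := by
    intro f F hFnn i2 h02 h12 hpt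
    rw [phiRisk_eq _ _ hη0 hη1]
    have hcg : (∫⁻ x, ENNReal.ofReal
          (cubeEta M h j x * (if f x ≤ 0 then (1:ℝ) else 0)
            + (1 - cubeEta M h j x) * (if -f x ≤ 0 then (1:ℝ) else 0)) ∂cubePX M w)
        = ∫⁻ x, ENNReal.ofReal (F (x 0) (x j.succ) (x i2)) ∂cubePX M w :=
      lintegral_congr fun x => by rw [hpt x]
    rw [hcg]
    exact lintegral_pi_three _ (hsucc0 j) h02 h12 F hFnn
  -- risk of the constant classifier 1
  have hconst : phiRisk (jointMeasure (cubePX M w) (cubeEta M h j))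
      (fun x => if x ≤ 0 then 1 else 0) (fun _ => 1) = (1 - w) * (1/2 - 3*h/4) := by
    rw [hcalc (fun _ => 1)
        (fun a b _ => 1 - (if a then (1:ℝ) else if b then 1/2 + h else 1/2 + h/2))
        (by intro a b c; rcases a <;> rcases b <;> simp <;> linarith)
        k0.succ (hsucc0 k0) (hsuccne j k0 (Ne.symm hk0))]
    · simp only [Fintype.sum_bool]
      norm_num [Fin.succ_ne_zero, mwt, mwf, mh]
      ring
    · intro x
      unfold cubeEta
      norm_num
  -- risk of f_j
  have hj : phiRisk (jointMeasure (cubePX M w) (cubeEta M h j))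
      (fun x => if x ≤ 0 then 1 else 0) (cubeF M j) = w/2 + (1-w) * (1/2 - h/4) := by
    rw [hcalc (cubeF M j)
        (fun a b _ => (if a then (1:ℝ) else if b then 1/2 + h else 1/2 + h/2)
            * (if b then 0 else 1)
          + (1 - (if a then (1:ℝ) else if b then 1/2 + h else 1/2 + h/2))
            * (if b then 1 else 0))
        (by intro a b c; rcases a <;> rcases b <;> simp <;> linarith)
        k0.succ (hsucc0 k0) (hsuccne j k0 (Ne.symm hk0))]
    · simp only [Fintype.sum_bool]
      norm_num [Fin.succ_ne_zero, mwt, mwf, mh]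
      ring
    · intro x
      unfold cubeEta cubeF
      rcases Bool.eq_false_or_eq_true (x j.succ) with h1 | h1 <;> simp [h1] <;> norm_num
  -- risk of f_k for k ≠ j
  have hk : ∀ k : Fin M, k ≠ j → phiRisk (jointMeasure (cubePX M w) (cubeEta M h j))
      (fun x => if x ≤ 0 then 1 else 0) (cubeF M k) = 1/2 := by
    intro k hkj
    rw [hcalc (cubeF M k)
        (fun a b c => (if a then (1:ℝ) else if b then 1/2 + h else 1/2 + h/2)
            * (if c then 0 else 1)
          + (1 - (if a then (1:ℝ) else if b then 1/2 + h else 1/2 + h/2))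
            * (if c then 1 else 0))
        (by intro a b c; rcases a <;> rcases b <;> rcases c <;> simp <;> linarith)
        k.succ (hsucc0 k) (hsuccne j k (Ne.symm hkj))]
    · simp only [Fintype.sum_bool]
      norm_num [Fin.succ_ne_zero, mwt, mwf, mh]
      ring
    · intro x
      unfold cubeEta cubeF
      rcases Bool.eq_false_or_eq_true (x k.succ) with h1 | h1 <;> simp [h1] <;> norm_num
  refine ⟨part1, ?_, ?_, ?_⟩
  · -- Bayes optimality of the constant classifier 1
    unfold phiRiskStar
    have hmem : phiRisk (jointMeasure (cubePX M w) (cubeEta M h j))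
          (fun x => if x ≤ 0 then 1 else 0) (fun _ => 1) ∈
        {r | ∃ f : (Fin (M+1) → Bool) → ℝ, Measurable f ∧
          r = phiRisk (jointMeasure (cubePX M w) (cubeEta M h j))
            (fun x => if x ≤ 0 then 1 else 0) f} :=
      ⟨fun _ => 1, measurable_const, rfl⟩
    refine (IsLeast.csInf_eq ⟨hmem, ?_⟩).symm
    rintro r ⟨f, -, rfl⟩
    rw [phiRisk_eq _ _ hη0 hη1, phiRisk_eq _ _ hη0 hη1]
    have hle1 : ∀ x : Fin (M+1) → Bool,
        cubeEta M h j x * (if f x ≤ 0 then (1:ℝ) else 0)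
          + (1 - cubeEta M h j x) * (if -f x ≤ 0 then (1:ℝ) else 0) ≤ 1 := by
      intro x
      have := hη0 x; have := hη1 x
      split_ifs <;> linarith
    have hfin : (∫⁻ x, ENNReal.ofReal
        (cubeEta M h j x * (if f x ≤ 0 then (1:ℝ) else 0)
          + (1 - cubeEta M h j x) * (if -f x ≤ 0 then (1:ℝ) else 0)) ∂cubePX M w) ≠ ⊤ := by
      refine ne_top_of_le_ne_top (by simp : (1 : ℝ≥0∞) * cubePX M w Set.univ ≠ ⊤) ?_
      rw [← MeasureTheory.lintegral_const]
      exact lintegral_mono fun x => ENNReal.ofReal_le_one.2 (hle1 x)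
    refine ENNReal.toReal_mono hfin (lintegral_mono fun x => ENNReal.ofReal_le_ofReal ?_)
    have h1 := part1 x
    have h2 := hη1 x
    split_ifs with hf1 hf2 hf2 <;> norm_num <;> linarith
  · -- f_j minimizes the risk over F
    intro k
    by_cases hkj : k = j
    · subst hkj; exact le_refl _
    · rw [hk k hkj, hj]
      nlinarith [mul_nonneg (sub_nonneg.2 hw1) hh0.le]
  · -- excess risk identity
    intro k hkj
    rw [hk k hkj, hj]
    ring
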